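/- For every n ≥ 6, the asymmetric index of the star graph satisfies ⌊(n−1)/2⌋ ≤ ai(K_{1,n−1}) ≤ n − 1. -/

import Mathlib

/-- A simple graph is *asymmetric* if its only automorphism is the identity. -/
def SimpleGraph.IsAsymmetric {V : Type*} (G : SimpleGraph V) : Prop :=
  ∀ f : G ≃g G, ∀ v : V, f v = v

/-- The *asymmetric index* `ai(G)`: the minimum, over all asymmetric graphs `G'` on the
same vertex set, of the number of edges in which `G` and `G'` differ (edges removed plus
edges added); `⊤` (infinity) if no asymmetric graph on the vertex set exists. -/
noncomputable def SimpleGraph.asymIndex {V : Type*} (G : SimpleGraph V) : ℕ∞ :=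
  sInf {n : ℕ∞ | ∃ G' : SimpleGraph V, G'.IsAsymmetric ∧
    n = (symmDiff G.edgeSet G'.edgeSet).encard}

namespace AsymStar

abbrev V (m : ℕ) := Fin 1 ⊕ Fin m

abbrev c {m : ℕ} : V m := Sum.inl 0

lemma inl_eq_c {m : ℕ} (a : Fin 1) : (Sum.inl a : V m) = c := by
  congr 1; exact Subsingleton.elim _ _

/-- Star + path `v₀ - v₁ - ⋯ - v_{m-2}` on the leaves, minus the star edge `c v₀`. -/
def pathStar (m : ℕ) : SimpleGraph (V m) where
  Adj x y :=
    match x, y with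
    | Sum.inl _, Sum.inl _ => False
    | Sum.inl _, Sum.inr j => j.val ≠ 0
    | Sum.inr i, Sum.inl _ => i.val ≠ 0
    | Sum.inr i, Sum.inr j =>
        (j.val = i.val + 1 ∧ j.val ≤ m - 2) ∨ (i.val = j.val + 1 ∧ i.val ≤ m - 2)
  symm := by constructor; rintro (a | a) (b | b) h <;> simp_all <;> tauto
  loopless := by constructor; rintro (a | a) h <;> simp_all

lemma adj_inl_inr {m : ℕ} (a : Fin 1) (j : Fin m) :
    (pathStar m).Adj (Sum.inl a) (Sum.inr j) ↔ j.val ≠ 0 := Iff.rfl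

lemma adj_inr_inl {m : ℕ} (i : Fin m) (a : Fin 1) :
    (pathStar m).Adj (Sum.inr i) (Sum.inl a) ↔ i.val ≠ 0 := Iff.rfl

lemma adj_inr_inr {m : ℕ} (i j : Fin m) :
    (pathStar m).Adj (Sum.inr i) (Sum.inr j) ↔
      (j.val = i.val + 1 ∧ j.val ≤ m - 2) ∨ (i.val = j.val + 1 ∧ i.val ≤ m - 2) := Iff.rfl

lemma adj_inl_inl {m : ℕ} (a b : Fin 1) :
    ¬ (pathStar m).Adj (Sum.inl a) (Sum.inl b) := fun h => h

/-- `x` has at most one non-neighbor besides itself. -/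
def Q {m : ℕ} (x : V m) : Prop :=
  ∀ y z : V m, y ≠ x → z ≠ x → ¬ (pathStar m).Adj x y → ¬ (pathStar m).Adj x z → y = z

section Asym
variable {m : ℕ}

lemma nonadj_c (hm : 1 ≤ m) (y : V m) (hy : y ≠ c) (h : ¬ (pathStar m).Adj c y) :
    y = Sum.inr ⟨0, hm⟩ := by
  rcases y with a | j
  · exact absurd (inl_eq_c a) hy
  · rw [show (c : V m) = Sum.inl 0 from rfl, adj_inl_inr] at h
    push_neg at h
    congr 1
    exact Fin.ext h

lemma Q_c (hm : 1 ≤ m) : Q (c : V m) := by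
  intro y z hy hz hay haz
  rw [nonadj_c hm y hy hay, nonadj_c hm z hz haz]

lemma not_Q_inr (hm : 5 ≤ m) (i : Fin m) : ¬ Q (Sum.inr i : V m) := by
  intro hQ
  rcases eq_or_ne i.val 0 with h0 | h0
  · have := hQ c (Sum.inr ⟨2, by omega⟩)
      (by simp [c]) (by simp [Fin.ext_iff]; omega)
      (by rw [(pathStar m).adj_comm, adj_inl_inr]; omega)
      (by rw [adj_inr_inr]; simp only []; omega)
    simp [c] at this
  · -- pick two leaf indices a b far from i
    obtain ⟨a, b, ha, hb, hab, hia, hib⟩ :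
        ∃ a b : ℕ, a < m ∧ b < m ∧ a ≠ b ∧
          (a ≠ i.val + 1 ∧ i.val ≠ a + 1 ∧ a ≠ i.val) ∧
          (b ≠ i.val + 1 ∧ i.val ≠ b + 1 ∧ b ≠ i.val) := by
      rcases eq_or_ne i.val 1 with h1 | h1
      · exact ⟨3, 4, by omega, by omega, by omega, by omega, by omega⟩
      rcases eq_or_ne i.val 2 with h2 | h2
      · exact ⟨0, 4, by omega, by omega, by omega, by omega, by omega⟩
      · exact ⟨0, 1, by omega, by omega, by omega, by omega, by omega⟩
    have := hQ (Sum.inr ⟨a, ha⟩) (Sum.inr ⟨b, hb⟩)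
      (by simp [Fin.ext_iff]; omega) (by simp [Fin.ext_iff]; omega)
      (by rw [adj_inr_inr]; simp; omega) (by rw [adj_inr_inr]; simp; omega)
    simp [Fin.ext_iff] at this
    omega

variable (f : pathStar m ≃g pathStar m)

lemma fix_c (hm : 5 ≤ m) : f c = c := by
  have hQ : Q (f c) := by
    intro y z hy hz hay haz
    have h1 : f.symm y ≠ c := by
      intro h; apply hy; rw [← f.apply_symm_apply y, h]
    have h2 : f.symm z ≠ c := by
      intro h; apply hz; rw [← f.apply_symm_apply z, h]
    have h3 : ¬ (pathStar m).Adj c (f.symm y) := by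
      intro h; apply hay
      have := f.map_rel_iff.mpr h
      rwa [f.apply_symm_apply] at this
    have h4 : ¬ (pathStar m).Adj c (f.symm z) := by
      intro h; apply haz
      have := f.map_rel_iff.mpr h
      rwa [f.apply_symm_apply] at this
    have := Q_c (by omega) (f.symm y) (f.symm z) h1 h2 h3 h4
    have := congrArg f this
    simpa using this
  rcases h : f c with a | i
  · exact inl_eq_c a
  · rw [h] at hQ
    exact absurd hQ (not_Q_inr hm i)

lemma adj_inr_cases (hm : 5 ≤ m) {k : ℕ} (hk : k < m) {y : V m}
    (h : (pathStar m).Adj (Sum.inr ⟨k, hk⟩) y) :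
    y = c ∨ ∃ j : Fin m, y = Sum.inr j ∧ (j.val = k + 1 ∨ k = j.val + 1) := by
  rcases y with a | j
  · exact Or.inl (inl_eq_c a)
  · rw [adj_inr_inr] at h
    simp only [] at h
    exact Or.inr ⟨j, rfl, by omega⟩

lemma fix_le (hm : 5 ≤ m) : ∀ k (hk : k ≤ m - 2),
    f (Sum.inr ⟨k, by omega⟩) = Sum.inr ⟨k, by omega⟩ := by
  intro k
  induction k using Nat.strong_induction_on with
  | _ k ih =>
    intro hk
    rcases Nat.eq_zero_or_pos k with rfl | hkpos
    · -- f (inr 0) = inr 0 : the unique non-neighbor of c other than c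
      have hne : f (Sum.inr ⟨0, by omega⟩) ≠ c := by
        intro h
        have : f (Sum.inr ⟨0, by omega⟩) = f c := by rw [h, fix_c f hm]
        simpa [c] using f.injective this
      have hna : ¬ (pathStar m).Adj c (f (Sum.inr ⟨0, by omega⟩)) := by
        rw [← fix_c f hm, f.map_rel_iff]
        rw [(pathStar m).adj_comm, adj_inr_inl]
        simp
      exact nonadj_c (by omega) _ hne hna
    · -- k ≥ 1, use the predecessor
      obtain ⟨l, rfl⟩ : ∃ l, k = l + 1 := ⟨k - 1, by omega⟩
      have hadj : (pathStar m).Adj (Sum.inr ⟨l, by omega⟩) (Sum.inr ⟨l + 1, by omega⟩) := by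
        rw [adj_inr_inr]; left; exact ⟨rfl, hk⟩
      have hl : f (Sum.inr ⟨l, by omega⟩) = Sum.inr ⟨l, by omega⟩ :=
        ih l (by omega) (by omega)
      have hadj' : (pathStar m).Adj (Sum.inr ⟨l, by omega⟩) (f (Sum.inr ⟨l + 1, by omega⟩)) := by
        rw [← hl, f.map_rel_iff]; exact hadj
      rcases adj_inr_cases hm (by omega) hadj' with h | ⟨j, hj, hjv⟩
      · exfalso
        rw [← fix_c f hm] at h
        have := f.injective h
        simp [c] at this
      · rw [hj]
        rcases hjv with h1 | h1
        · congr 1; exact Fin.ext (by simp only []; omega)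
        · -- f (inr (l+1)) = inr (l-1) = f (inr (l-1)), contradiction
          exfalso
          have hj2 : f (Sum.inr ⟨j.val, j.isLt⟩) = Sum.inr ⟨j.val, j.isLt⟩ :=
            ih j.val (by omega) (by omega)
          have hj3 : f (Sum.inr j) = f (Sum.inr ⟨l + 1, by omega⟩) := by
            rw [hj]
            congr 1
          have : (Sum.inr j : V m) = Sum.inr ⟨l + 1, by omega⟩ := f.injective hj3
          simp [Fin.ext_iff] at this
          omega

lemma pathStar_asym (hm : 5 ≤ m) : (pathStar m).IsAsymmetric := by
  intro f v
  have hfix : ∀ w : V m, w ≠ Sum.inr ⟨m - 1, by omega⟩ → f w = w := by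
    rintro (a | j) hw
    · rw [inl_eq_c]; exact fix_c f hm
    · have : j.val ≤ m - 2 := by
        rcases Nat.lt_or_ge j.val (m - 1) with h | h
        · omega
        · exfalso; apply hw; congr 1; exact Fin.ext (by simp only []; omega)
      have := fix_le f hm j.val this
      convert this using 2 <;> exact (Fin.ext rfl)
  rcases eq_or_ne v (Sum.inr ⟨m - 1, by omega⟩) with rfl | hv
  · by_contra hne
    have h1 : f (Sum.inr ⟨m - 1, by omega⟩) ≠ Sum.inr ⟨m - 1, by omega⟩ := hne
    have h2 := hfix _ h1
    exact h1 (f.injective (by rw [h2]))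
  · exact hfix v hv

end Asym

section Upper
variable {m : ℕ}

lemma star_adj_inr (x : V m) (i : Fin m) :
    (completeBipartiteGraph (Fin 1) (Fin m)).Adj x (Sum.inr i) ↔ x = c := by
  rcases x with a | k
  · simp [completeBipartiteGraph, inl_eq_c]
  · simp [completeBipartiteGraph]

lemma star_not_adj_inl (x : V m) (a : Fin 1) :
    ¬ (completeBipartiteGraph (Fin 1) (Fin m)).Adj x (Sum.inl a) ∨ True := Or.inr trivial

noncomputable def g (m : ℕ) : Fin m → Sym2 (V m) := fun k =>
  if k.val = 0 then s(c, Sum.inr ⟨0, Nat.lt_of_le_of_lt (Nat.zero_le _) k.isLt⟩)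
  else s(Sum.inr ⟨k.val - 1, by omega⟩, Sum.inr k)

lemma symmDiff_subset_range (hm : 5 ≤ m) :
    symmDiff (completeBipartiteGraph (Fin 1) (Fin m)).edgeSet (pathStar m).edgeSet
      ⊆ Set.range (g m) := by
  intro e he
  induction e using Sym2.ind with
  | _ x y =>
    rw [Set.mem_symmDiff] at he
    simp only [SimpleGraph.mem_edgeSet] at he
    have key : ∀ a b : V m, (completeBipartiteGraph (Fin 1) (Fin m)).Adj a b ∧
        ¬ (pathStar m).Adj a b ∨ (pathStar m).Adj a b ∧
        ¬ (completeBipartiteGraph (Fin 1) (Fin m)).Adj a b → s(a, b) ∈ Set.range (g m) := by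
      rintro (a₁ | i) (b₁ | j) h
      · exfalso
        rcases h with ⟨h1, _⟩ | ⟨h1, _⟩
        · simp [completeBipartiteGraph] at h1
        · exact adj_inl_inl _ _ h1
      · -- inl, inr : must be the removed star edge c v₀
        have hj : j.val = 0 := by
          rcases h with ⟨_, h2⟩ | ⟨h2, h3⟩
          · rw [adj_inl_inr] at h2; push_neg at h2; exact h2
          · exfalso; exact h3 (by simp [completeBipartiteGraph])
        refine ⟨⟨0, by omega⟩, ?_⟩
        simp only [g]
        rw [if_pos trivial, inl_eq_c a₁, Sym2.eq_iff]
        exact Or.inl ⟨rfl, congrArg Sum.inr (Fin.ext (show (0 : ℕ) = j.val from hj.symm))⟩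
      · -- inr, inl : symmetric
        have hi : i.val = 0 := by
          rcases h with ⟨_, h2⟩ | ⟨h2, h3⟩
          · rw [adj_inr_inl] at h2; push_neg at h2; exact h2
          · exfalso; exact h3 (by simp [completeBipartiteGraph])
        refine ⟨⟨0, by omega⟩, ?_⟩
        simp only [g]
        rw [if_pos trivial, inl_eq_c b₁, Sym2.eq_iff]
        exact Or.inr ⟨rfl, congrArg Sum.inr (Fin.ext (show (0 : ℕ) = i.val from hi.symm))⟩
      · -- inr, inr : a path edge
        have hp : (pathStar m).Adj (Sum.inr i) (Sum.inr j) := by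
          rcases h with ⟨h1, _⟩ | ⟨h1, _⟩
          · exfalso; simp [completeBipartiteGraph] at h1
          · exact h1
        rw [adj_inr_inr] at hp
        rcases hp with ⟨h1, h2⟩ | ⟨h1, h2⟩
        · refine ⟨j, ?_⟩
          simp only [g]
          rw [if_neg (by omega), Sym2.eq_iff]
          exact Or.inl ⟨congrArg Sum.inr (Fin.ext (show j.val - 1 = i.val by omega)), rfl⟩
        · refine ⟨i, ?_⟩
          simp only [g]
          rw [if_neg (by omega), Sym2.eq_iff]
          exact Or.inr ⟨congrArg Sum.inr (Fin.ext (show i.val - 1 = j.val by omega)), rfl⟩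
    exact key x y he

lemma encard_symmDiff_le (hm : 5 ≤ m) :
    (symmDiff (completeBipartiteGraph (Fin 1) (Fin m)).edgeSet (pathStar m).edgeSet).encard
      ≤ (m : ℕ∞) := by
  calc (symmDiff (completeBipartiteGraph (Fin 1) (Fin m)).edgeSet (pathStar m).edgeSet).encard
      ≤ (Set.range (g m)).encard := Set.encard_mono (symmDiff_subset_range hm)
    _ ≤ (Set.univ : Set (Fin m)).encard := by
        rw [← Set.image_univ]; exact Set.encard_image_le _ _
    _ = (m : ℕ∞) := by
        rw [Set.encard_univ]
        simp [ENat.card_eq_coe_fintype_card]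

end Upper

section Lower
variable {m : ℕ}

/-- If `u` and `v` both have neighborhood exactly `{c0}`, swapping them is an automorphism. -/
lemma swap_adj {W : Type*} [DecidableEq W] (G : SimpleGraph W) (u v c0 : W)
    (hu : ∀ x, G.Adj x u ↔ x = c0) (hv : ∀ x, G.Adj x v ↔ x = c0)
    (hcu : c0 ≠ u) (hcv : c0 ≠ v) :
    ∀ a b : W, G.Adj (Equiv.swap u v a) (Equiv.swap u v b) ↔ G.Adj a b := by
  have key : ∀ x y : W, G.Adj x y → G.Adj (Equiv.swap u v x) (Equiv.swap u v y) := by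
    intro x y hxy
    by_cases hxu : x = u
    · subst hxu
      have hy : y = c0 := (hu y).mp ((G.adj_comm _ _).mp hxy)
      rw [hy, Equiv.swap_apply_left, Equiv.swap_apply_of_ne_of_ne hcu hcv]
      exact (G.adj_comm _ _).mp ((hv c0).mpr rfl)
    by_cases hxv : x = v
    · subst hxv
      have hy : y = c0 := (hv y).mp ((G.adj_comm _ _).mp hxy)
      rw [hy, Equiv.swap_apply_right, Equiv.swap_apply_of_ne_of_ne hcu hcv]
      exact (G.adj_comm _ _).mp ((hu c0).mpr rfl)
    by_cases hyu : y = u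
    · subst hyu
      have hx : x = c0 := (hu x).mp hxy
      rw [hx, Equiv.swap_apply_left, Equiv.swap_apply_of_ne_of_ne hcu hcv]
      exact (hv c0).mpr rfl
    by_cases hyv : y = v
    · subst hyv
      have hx : x = c0 := (hv x).mp hxy
      rw [hx, Equiv.swap_apply_right, Equiv.swap_apply_of_ne_of_ne hcu hcv]
      exact (hu c0).mpr rfl
    · rw [Equiv.swap_apply_of_ne_of_ne hxu hxv, Equiv.swap_apply_of_ne_of_ne hyu hyv]
      exact hxy
  intro a b
  constructor
  · intro h
    have := key _ _ h
    simpa [Equiv.swap_apply_self] using this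
  · exact key a b

lemma lower_bound (hm : 5 ≤ m) (G' : SimpleGraph (V m)) (hA : G'.IsAsymmetric) :
    ((m / 2 : ℕ) : ℕ∞) ≤
      (symmDiff (completeBipartiteGraph (Fin 1) (Fin m)).edgeSet G'.edgeSet).encard := by
  classical
  set D : Set (Sym2 (V m)) :=
    symmDiff (completeBipartiteGraph (Fin 1) (Fin m)).edgeSet G'.edgeSet with hD
  have hDfin : D.Finite := Set.toFinite _
  -- a leaf is untouched if no changed edge is incident to it
  set unt : Fin m → Prop := fun i => ∀ x : V m, s(x, Sum.inr i) ∉ D with hunt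
  -- untouched leaves retain neighborhood {c} in G'
  have hnb : ∀ i : Fin m, unt i → ∀ x : V m, G'.Adj x (Sum.inr i) ↔ x = c := by
    intro i hi x
    have h1 : s(x, Sum.inr i) ∉ D := hi x
    rw [hD, Set.mem_symmDiff] at h1
    push_neg at h1
    have h2 : s(x, Sum.inr i) ∈ (completeBipartiteGraph (Fin 1) (Fin m)).edgeSet ↔
        s(x, Sum.inr i) ∈ G'.edgeSet := by tauto
    rw [SimpleGraph.mem_edgeSet, SimpleGraph.mem_edgeSet] at h2
    rw [← h2, star_adj_inr]
  -- at most one untouched leaf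
  have hsub : ∀ i j : Fin m, unt i → unt j → i = j := by
    intro i j hi hj
    by_contra hij
    have hne : (Sum.inr i : V m) ≠ Sum.inr j := by simp [hij]
    have hadj := swap_adj G' (Sum.inr i) (Sum.inr j) c (hnb i hi) (hnb j hj)
      (by simp) (by simp)
    let f : G' ≃g G' :=
      { toEquiv := Equiv.swap (Sum.inr i : V m) (Sum.inr j),
        map_rel_iff' := fun {a b} => hadj a b }
    have := hA f (Sum.inr i)
    rw [show f (Sum.inr i) = Equiv.swap (Sum.inr i : V m) (Sum.inr j) (Sum.inr i) from rfl,
      Equiv.swap_apply_left] at this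
    exact hne this.symm
  -- the finset of touched leaves
  set Tf : Finset (Fin m) := Finset.univ.filter (fun i => ¬ unt i) with hTf
  have hcard1 : m - 1 ≤ Tf.card := by
    have huntcard : (Finset.univ.filter (fun i : Fin m => unt i)).card ≤ 1 := by
      apply Finset.card_le_one.mpr
      intro a ha b hb
      exact hsub a b (Finset.mem_filter.mp ha).2 (Finset.mem_filter.mp hb).2
    have hpart : (Finset.univ.filter (fun i : Fin m => unt i)).card + Tf.card = m := by
      rw [hTf]
      have := Finset.card_filter_add_card_filter_not
        (s := (Finset.univ : Finset (Fin m))) (p := fun i => unt i)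
      simpa using this
    omega
  -- choose a changed edge at each touched leaf
  set pick : Fin m → Sym2 (V m) := fun i =>
    if h : ∃ x : V m, s(x, Sum.inr i) ∈ D then s(h.choose, Sum.inr i) else s(c, c) with hpick
  have hpick_mem : ∀ i ∈ Tf, pick i ∈ D := by
    intro i hi
    have hti : ¬ unt i := (Finset.mem_filter.mp hi).2
    simp only [hunt] at hti
    push_neg at hti
    rw [hpick]
    simp only [dif_pos hti]
    exact hti.choose_spec
  have hpick_inc : ∀ i ∈ Tf, (Sum.inr i : V m) ∈ pick i := by
    intro i hi
    have hti : ¬ unt i := (Finset.mem_filter.mp hi).2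
    simp only [hunt] at hti
    push_neg at hti
    rw [hpick]
    simp only [dif_pos hti]
    exact Sym2.mem_mk_right _ _
  -- each changed edge is picked by at most two leaves
  have hcard2 : Tf.card ≤ 2 * (Tf.image pick).card := by
    apply Finset.card_le_mul_card_image
    intro e he
    induction e using Sym2.ind with
    | _ y z =>
      have hsub2 : Tf.filter (fun i => pick i = s(y, z)) ⊆
          Finset.univ.filter (fun i => (Sum.inr i : V m) = y) ∪
          Finset.univ.filter (fun i => (Sum.inr i : V m) = z) := by
        intro i hi
        obtain ⟨hiT, hie⟩ := Finset.mem_filter.mp hi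
        have := hpick_inc i hiT
        rw [hie, Sym2.mem_iff] at this
        rcases this with h | h
        · exact Finset.mem_union_left _ (Finset.mem_filter.mpr ⟨Finset.mem_univ _, h⟩)
        · exact Finset.mem_union_right _ (Finset.mem_filter.mpr ⟨Finset.mem_univ _, h⟩)
      calc (Tf.filter (fun i => pick i = s(y, z))).card
          ≤ (Finset.univ.filter (fun i => (Sum.inr i : V m) = y) ∪
             Finset.univ.filter (fun i => (Sum.inr i : V m) = z)).card :=
            Finset.card_le_card hsub2
        _ ≤ (Finset.univ.filter (fun i => (Sum.inr i : V m) = y)).card +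
            (Finset.univ.filter (fun i => (Sum.inr i : V m) = z)).card :=
            Finset.card_union_le _ _
        _ ≤ 1 + 1 := by
            have hy1 : (Finset.univ.filter (fun i => (Sum.inr i : V m) = y)).card ≤ 1 := by
              apply Finset.card_le_one.mpr
              intro a ha b hb
              have h1 := (Finset.mem_filter.mp ha).2
              have h2 := (Finset.mem_filter.mp hb).2
              have : (Sum.inr a : V m) = Sum.inr b := by rw [h1, h2]
              simpa using this
            have hz1 : (Finset.univ.filter (fun i => (Sum.inr i : V m) = z)).card ≤ 1 := by
              apply Finset.card_le_one.mpr
              intro a ha b hb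
              have h1 := (Finset.mem_filter.mp ha).2
              have h2 := (Finset.mem_filter.mp hb).2
              have : (Sum.inr a : V m) = Sum.inr b := by rw [h1, h2]
              simpa using this
            exact Nat.add_le_add hy1 hz1
  have himg : Tf.image pick ⊆ hDfin.toFinset := by
    intro e he
    obtain ⟨i, hi, rfl⟩ := Finset.mem_image.mp he
    rw [Set.Finite.mem_toFinset]
    exact hpick_mem i hi
  have hfinal : m - 1 ≤ 2 * hDfin.toFinset.card := by
    calc m - 1 ≤ Tf.card := hcard1
      _ ≤ 2 * (Tf.image pick).card := hcard2
      _ ≤ 2 * hDfin.toFinset.card :=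
          Nat.mul_le_mul_left 2 (Finset.card_le_card himg)
  rw [hDfin.encard_eq_coe_toFinset_card]
  exact Nat.cast_le.mpr (by omega)

end Lower

end AsymStar

/-- For `n ≥ 6`, the star `K_{1,n-1}` satisfies `⌊(n-1)/2⌋ ≤ ai(K_{1,n-1}) ≤ n - 1`. -/
theorem asymIndex_star {n : ℕ} (hn : 6 ≤ n) :
    (((n - 1) / 2 : ℕ) : ℕ∞) ≤ (completeBipartiteGraph (Fin 1) (Fin (n - 1))).asymIndex ∧
      (completeBipartiteGraph (Fin 1) (Fin (n - 1))).asymIndex ≤ ((n - 1 : ℕ) : ℕ∞) := by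
  have hm : 5 ≤ n - 1 := by omega
  constructor
  · apply le_sInf
    rintro b ⟨G', hA, rfl⟩
    exact AsymStar.lower_bound hm G' hA
  · refine le_trans (sInf_le ?_) (AsymStar.encard_symmDiff_le hm)
    exact ⟨AsymStar.pathStar (n - 1), AsymStar.pathStar_asym hm, rfl⟩
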